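/- Let B be a standard one-dimensional Brownian motion with diffusion coefficient 2 (i.e., Var B(t) = 2t). There exists a constant C > 0 such that for all r, s > 0, P( sup over y ∈ ℝ and |z| ≤ r of [B(y) − B(z) − (y−z)²/4] ≥ s ) ≤ (r+1)·C·exp(−s^{3/2}/C). -/

import Mathlib

open MeasureTheory ProbabilityTheory

/-- A two-sided Brownian motion with diffusion coefficient 2: continuous paths,
starts at 0, Gaussian increments with variance `2|t-s|`, and independent increments. -/
structure IsTwoSidedBM {Ω : Type*} [MeasureSpace Ω] (B : ℝ → Ω → ℝ) : Prop where
  meas : ∀ t : ℝ, Measurable (B t)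
  init : ∀ᵐ ω : Ω, B 0 ω = 0
  cont : ∀ᵐ ω : Ω, Continuous fun t => B t ω
  gauss : ∀ s t : ℝ, s ≤ t →
    Measure.map (fun ω => B t ω - B s ω) ℙ = gaussianReal 0 (Real.toNNReal (2*(t-s)))
  indep : ∀ (n : ℕ) (t : Fin (n+1) → ℝ), Monotone t →
    iIndepFun
      (fun i : Fin n => fun ω => B (t i.succ) ω - B (t i.castSucc) ω) ℙ

open MeasureTheory ProbabilityTheory Real NNReal

lemma gauss_mgf (v : ℝ≥0) (hv : v ≠ 0) (l : ℝ) :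
    ∫ x, rexp (l * x) * gaussianPDFReal 0 v x = rexp (l^2 * v / 2) := by
  have hv' : (0:ℝ) < v := lt_of_le_of_ne (v.coe_nonneg) (by exact_mod_cast (Ne.symm hv))
  have h : ∀ x, rexp (l * x) * gaussianPDFReal 0 v x
      = rexp (l^2 * v / 2) * gaussianPDFReal (l * v) v x := by
    intro x
    simp only [gaussianPDFReal]
    rw [show rexp (l^2 * v / 2) * ((√(2 * π * v))⁻¹ * rexp (-(x - l * v)^2 / (2*v)))
        = (√(2 * π * v))⁻¹ * (rexp (l^2 * v / 2) * rexp (-(x - l * v)^2 / (2*v))) by ring,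
      ← Real.exp_add, mul_comm (rexp (l*x)), mul_assoc, ← Real.exp_add]
    congr 2
    field_simp
    ring
  simp_rw [h]
  rw [MeasureTheory.integral_const_mul, integral_gaussianPDFReal_eq_one _ hv, mul_one]

lemma gauss_abs_tail (v : ℝ≥0) (a : ℝ) (ha : 0 < a) :
    gaussianReal 0 v {x | a ≤ |x|} ≤ ENNReal.ofReal (2 * rexp (-a^2 / (2*v))) := by
  have hsm : MeasurableSet {x : ℝ | a ≤ |x|} :=
    measurableSet_le measurable_const measurable_id.abs
  by_cases hv : v = 0
  · subst hv
    simp only [NNReal.coe_zero, mul_zero, div_zero, Real.exp_zero, mul_one]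
    rw [gaussianReal_zero_var, Measure.dirac_apply' _ hsm]
    simp only [Set.indicator_apply, Set.mem_setOf_eq, abs_zero]
    rw [if_neg (by linarith)]
    simp
  · have hv' : (0:ℝ) < v := lt_of_le_of_ne (v.coe_nonneg) (by exact_mod_cast (Ne.symm hv))
    set l : ℝ := a / v with hl
    have hl0 : 0 < l := div_pos ha hv'
    set p : ℝ → ℝ := gaussianPDFReal 0 v with hp
    have hint : ∀ c : ℝ, Integrable (fun x => rexp (c * x) * p x) := by
      intro c
      have h : (fun x => rexp (c * x) * p x)
          = fun x => rexp (c^2 * v / 2) * gaussianPDFReal (c * v) v x := by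
        funext x
        simp only [hp, gaussianPDFReal]
        rw [show rexp (c^2 * v / 2) * ((√(2 * π * v))⁻¹ * rexp (-(x - c * v)^2 / (2*v)))
            = (√(2 * π * v))⁻¹ * (rexp (c^2 * v / 2) * rexp (-(x - c * v)^2 / (2*v))) by ring,
          ← Real.exp_add, mul_comm (rexp (c*x)), mul_assoc, ← Real.exp_add]
        congr 2
        field_simp
        ring
      rw [h]
      exact (integrable_gaussianPDFReal _ _).const_mul _
    have hint1 : Integrable (fun x => rexp (-(l*a)) * (rexp (l * x) * p x)
        + rexp (-(l*a)) * (rexp (-l * x) * p x)) :=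
      ((hint l).const_mul _).add ((hint (-l)).const_mul _)
    have key : ∫ x in {x : ℝ | a ≤ |x|}, p x ≤ 2 * rexp (-a^2 / (2*v)) := by
      have hle : ∀ x ∈ {x : ℝ | a ≤ |x|}, p x ≤ rexp (-(l*a)) * (rexp (l * x) * p x)
          + rexp (-(l*a)) * (rexp (-l * x) * p x) := by
        intro x hx
        have hx' : a ≤ |x| := hx
        have hpx : 0 ≤ p x := gaussianPDFReal_nonneg _ _ _
        rcases le_abs.mp hx' with h | h
        · have h1 : (1:ℝ) ≤ rexp (-(l*a)) * rexp (l * x) := by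
            rw [← Real.exp_add]
            have : 0 ≤ -(l*a) + l * x := by nlinarith
            calc (1:ℝ) = rexp 0 := (Real.exp_zero).symm
            _ ≤ _ := Real.exp_le_exp.mpr this
          nlinarith [Real.exp_pos (-(l*a)), Real.exp_pos (-l * x),
            mul_nonneg (mul_nonneg (Real.exp_pos (-(l*a))).le (Real.exp_pos (-l*x)).le) hpx]
        · have h1 : (1:ℝ) ≤ rexp (-(l*a)) * rexp (-l * x) := by
            rw [← Real.exp_add]
            have : 0 ≤ -(l*a) + -l * x := by nlinarith
            calc (1:ℝ) = rexp 0 := (Real.exp_zero).symm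
            _ ≤ _ := Real.exp_le_exp.mpr this
          nlinarith [Real.exp_pos (-(l*a)), Real.exp_pos (l * x),
            mul_nonneg (mul_nonneg (Real.exp_pos (-(l*a))).le (Real.exp_pos (l*x)).le) hpx]
      calc ∫ x in {x : ℝ | a ≤ |x|}, p x
          ≤ ∫ x in {x : ℝ | a ≤ |x|}, (rexp (-(l*a)) * (rexp (l * x) * p x)
              + rexp (-(l*a)) * (rexp (-l * x) * p x)) :=
            setIntegral_mono_on ((integrable_gaussianPDFReal 0 v).integrableOn)
              hint1.integrableOn hsm hle
        _ ≤ ∫ x, (rexp (-(l*a)) * (rexp (l * x) * p x)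
              + rexp (-(l*a)) * (rexp (-l * x) * p x)) := by
            refine setIntegral_le_integral hint1 (ae_of_all _ fun x => ?_)
            have hpx : 0 ≤ p x := gaussianPDFReal_nonneg _ _ _
            positivity
        _ = rexp (-(l*a)) * rexp (l^2 * v / 2) + rexp (-(l*a)) * rexp ((-l)^2 * v / 2) := by
            rw [integral_add ((hint l).const_mul _) ((hint (-l)).const_mul _),
              MeasureTheory.integral_const_mul, MeasureTheory.integral_const_mul,
              gauss_mgf v hv l, gauss_mgf v hv (-l)]
        _ = 2 * rexp (-a^2 / (2*v)) := by
            have h2 : ((-l):ℝ)^2 = l^2 := by ring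
            have h3 : -(l*a) + l^2 * v / 2 = -a^2/(2*v) := by
              rw [hl]
              field_simp
              ring
            rw [h2, ← Real.exp_add, h3]
            ring
    rw [gaussianReal_apply_eq_integral _ hv]
    exact ENNReal.ofReal_le_ofReal key

lemma key_ineq {s : ℝ} (hs : 1 ≤ s) (d : ℕ) :
    (s ^ ((3:ℝ)/2) + d) / 18874368 ≤ ((s + (d:ℝ)^2)/12)^2 / (4096 * ((d:ℝ)+1)) := by
  have hs0 : (0:ℝ) ≤ s := by linarith
  have hpow : s ^ ((3:ℝ)/2) = (Real.sqrt s)^3 := by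
    rw [← Real.rpow_natCast (Real.sqrt s) 3, Real.sqrt_eq_rpow,
      ← Real.rpow_mul hs0]
    norm_num
  have hu1 : (1:ℝ) ≤ Real.sqrt s := by
    rw [show (1:ℝ) = Real.sqrt 1 by simp]
    exact Real.sqrt_le_sqrt hs
  have hu2 : (Real.sqrt s)^2 = s := Real.sq_sqrt hs0
  set u := Real.sqrt s with hu
  rw [hpow, ← hu2]
  set D := (d:ℝ) with hD
  have hD0 : 0 ≤ D := Nat.cast_nonneg d
  have hmain : ((D:ℝ)+1) * (u^3 + D) ≤ 32 * (u^2 + D^2)^2 := by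
    rcases Nat.eq_zero_or_pos d with h0 | h1
    · rw [hD, h0]
      push_cast
      nlinarith [sq_nonneg u, sq_nonneg (u-1)]
    · have hD1 : (1:ℝ) ≤ D := by rw [hD]; exact_mod_cast h1
      rcases le_total (D + 1) u with hcase | hcase
      · nlinarith [sq_nonneg u, sq_nonneg D, sq_nonneg (u*D), pow_pos (lt_of_lt_of_le one_pos hu1) 3]
      · nlinarith [sq_nonneg u, sq_nonneg D, sq_nonneg (u - D), sq_nonneg (u*D),
          mul_le_mul_of_nonneg_left hcase (by positivity : (0:ℝ) ≤ u^2),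
          pow_le_pow_left₀ (by linarith : (0:ℝ) ≤ u) (by linarith : u ≤ 2*D) 3]
  have hpos : (0:ℝ) < 4096 * (D + 1) := by positivity
  rw [div_le_div_iff₀ (by norm_num) hpos]
  nlinarith [hmain]

noncomputable def tau (s : ℝ) (m k : ℤ) : ℝ := (s + ((((m-k).natAbs - 1 : ℕ)):ℝ)^2)/12

def pairSet {Ω : Type} [MeasureSpace Ω] (B : ℝ → Ω → ℝ) (s : ℝ) (m k : ℤ) : Set Ω :=
  {ω | ∃ x ∈ Set.Icc (m:ℝ) ((m:ℝ)+1), tau s m k ≤ |B x ω - B (m:ℝ) ω|}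
  ∪ ({ω | ∃ x ∈ Set.Icc (k:ℝ) ((k:ℝ)+1), tau s m k ≤ |B x ω - B (k:ℝ) ω|}
  ∪ {ω | tau s m k ≤ |B (m:ℝ) ω - B (k:ℝ) ω|})

section BM
variable {Ω : Type} [MeasureSpace Ω] [IsProbabilityMeasure (ℙ : Measure Ω)]
  {B : ℝ → Ω → ℝ} (hB : IsTwoSidedBM B)

include hB

lemma bm_abs_tail (u w a : ℝ) (ha : 0 < a) :
    ℙ {ω | a ≤ |B w ω - B u ω|} ≤ ENNReal.ofReal (2 * rexp (-a^2 / (4 * |w - u|))) := by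
  have hsm : MeasurableSet {x : ℝ | a ≤ |x|} :=
    measurableSet_le measurable_const measurable_id.abs
  have main : ∀ u w : ℝ, u ≤ w →
      ℙ {ω | a ≤ |B w ω - B u ω|} ≤ ENNReal.ofReal (2 * rexp (-a^2 / (4 * |w - u|))) := by
    intro u w huw
    have hXm : Measurable (fun ω => B w ω - B u ω) := (hB.meas w).sub (hB.meas u)
    have : ℙ {ω | a ≤ |B w ω - B u ω|}
        = Measure.map (fun ω => B w ω - B u ω) ℙ {x | a ≤ |x|} := by
      rw [Measure.map_apply hXm hsm]
      rfl
    rw [this, hB.gauss u w huw]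
    refine (gauss_abs_tail _ a ha).trans_eq ?_
    congr 2
    rw [Real.coe_toNNReal _ (by linarith), abs_of_nonneg (by linarith : (0:ℝ) ≤ w - u)]
    ring
  rcases le_total u w with h | h
  · exact main u w h
  · have h1 : {ω | a ≤ |B w ω - B u ω|} = {ω | a ≤ |B u ω - B w ω|} := by
      ext ω; simp [abs_sub_comm]
    have h2 : |w - u| = |u - w| := abs_sub_comm _ _
    rw [h1, h2]
    exact main w u h

omit hB in
lemma dyadic_chain {a u : ℝ} (ha : 0 < a) (ω : Ω)
    (h : ∀ n j : ℕ, j < 2^n →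
      |B (u + (j+1:ℕ)/2^n) ω - B (u + (j:ℕ)/2^n) ω| < a * ((1/8)*(3/4)^n)) :
    ∀ N : ℕ, ∀ i ≤ 2^N, |B (u + (i:ℕ)/2^N) ω - B u ω|
      ≤ a * ∑ n ∈ Finset.range (N+1), ((1/8:ℝ)*(3/4)^n) := by
  have hcpos : ∀ n : ℕ, (0:ℝ) < (1/8)*(3/4)^n := fun n => by positivity
  intro N
  induction N with
  | zero =>
    intro i hi
    interval_cases i
    · simp only [Nat.cast_zero, zero_div, add_zero, sub_self, abs_zero]
      positivity
    · have := h 0 0 (by norm_num)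
      simp only [Nat.cast_zero, zero_div, add_zero, Nat.cast_one, pow_zero] at this ⊢
      rw [Finset.sum_range_one]
      exact le_of_lt (by simpa using this)
  | succ N ih =>
    intro i hi
    have h2 : (2:ℝ)^(N+1) = 2 * 2^N := by ring
    rcases Nat.even_or_odd i with ⟨j, rfl⟩ | ⟨j, rfl⟩
    · -- i = j + j
      have hj : j ≤ 2^N := by
        have := Nat.pow_succ 2 N; omega
      have hq : (↑(j+j):ℝ)/2^(N+1) = (j:ℝ)/2^N := by
        push_cast
        rw [h2]
        field_simp
        ring
      rw [hq]
      refine (ih j hj).trans ?_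
      have hpos : (0:ℝ) ≤ a * ((1/8:ℝ)*(3/4)^(N+1)) := le_of_lt (by positivity)
      rw [Finset.sum_range_succ _ (N+1), mul_add]
      linarith
    · -- i = 2j+1
      have hj : j < 2^N := by
        have h' : 2*j+1 ≤ 2^(N+1) := hi
        have := Nat.pow_succ 2 N; omega
      have hq2 : (↑(2*j):ℝ)/2^(N+1) = (j:ℝ)/2^N := by
        push_cast
        rw [h2]
        field_simp
      have hinc := h (N+1) (2*j) (by omega)
      calc |B (u + (↑(2*j+1):ℝ)/2^(N+1)) ω - B u ω|
          ≤ |B (u + (↑(2*j+1):ℝ)/2^(N+1)) ω - B (u + (↑(2*j):ℝ)/2^(N+1)) ω|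
            + |B (u + (↑(2*j):ℝ)/2^(N+1)) ω - B u ω| := abs_sub_le _ _ _
        _ ≤ a * ((1/8:ℝ)*(3/4)^(N+1)) + a * ∑ n ∈ Finset.range (N+1), ((1/8:ℝ)*(3/4)^n) := by
            have h1 : |B (u + (↑(2*j+1):ℝ)/2^(N+1)) ω - B (u + (↑(2*j):ℝ)/2^(N+1)) ω|
                ≤ a * ((1/8:ℝ)*(3/4)^(N+1)) := by
              have hcast : ((2*j+1:ℕ):ℝ) = ((2*j:ℕ):ℝ) + 1 := by push_cast; ring
              rw [hcast] at hinc ⊢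
              exact le_of_lt hinc
            have h2' : |B (u + (↑(2*j):ℝ)/2^(N+1)) ω - B u ω|
                ≤ a * ∑ n ∈ Finset.range (N+1), ((1/8:ℝ)*(3/4)^n) := by
              rw [hq2]; exact ih j (le_of_lt hj)
            linarith
        _ = a * ∑ n ∈ Finset.range (N+2), ((1/8:ℝ)*(3/4)^n) := by
            rw [Finset.sum_range_succ _ (N+1)]
            ring

lemma osc_tail (u a : ℝ) (ha : 0 < a) :
    ℙ {ω | ∃ t ∈ Set.Icc u (u+1), a ≤ |B t ω - B u ω|}
      ≤ ENNReal.ofReal (4096 * rexp (-a^2/4096)) := by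
  by_cases ha64 : a ≤ 64
  · refine (prob_le_one).trans ?_
    rw [show (1:ENNReal) = ENNReal.ofReal 1 by simp]
    refine ENNReal.ofReal_le_ofReal ?_
    have h1 : rexp (-1) ≤ rexp (-a^2/4096) := by
      apply Real.exp_le_exp.mpr
      nlinarith
    have h2 : (1:ℝ) ≤ 4096 * rexp (-1) := by
      rw [Real.exp_neg]
      have hlt := Real.exp_one_lt_d9
      have hpos := Real.exp_pos 1
      have hinv : rexp 1 * (rexp 1)⁻¹ = 1 := mul_inv_cancel₀ (ne_of_gt hpos)
      nlinarith [inv_pos.mpr hpos]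
    nlinarith [Real.exp_pos (-a^2/4096), Real.exp_pos (-1)]
  · push_neg at ha64
    have ha0 : (0:ℝ) < a := by linarith
    set A : ℕ → ℕ → Set Ω := fun n j =>
      {ω | a * ((1/8)*(3/4)^n) ≤ |B (u + (j+1:ℕ)/2^n) ω - B (u + (j:ℕ)/2^n) ω|} with hA
    set G : Set Ω := ⋃ n : ℕ, ⋃ j ∈ Finset.range (2^n), A n j with hG
    have hincl : {ω | ∃ t ∈ Set.Icc u (u+1), a ≤ |B t ω - B u ω|}
        ⊆ G ∪ {ω | ¬ Continuous fun t => B t ω} := by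
      intro ω hω
      obtain ⟨t, ht, hat⟩ := hω
      by_cases hGm : ω ∈ G
      · exact Or.inl hGm
      right
      intro hcont
      simp only [hG, hA, Set.mem_iUnion, Finset.mem_range, Set.mem_setOf_eq] at hGm
      push_neg at hGm
      have hsmall : ∀ n j : ℕ, j < 2^n →
          |B (u + (j+1:ℕ)/2^n) ω - B (u + (j:ℕ)/2^n) ω| < a * ((1/8)*(3/4)^n) := by
        intro n j hj
        exact hGm n j hj
      have hdy := dyadic_chain ha0 ω hsmall
      have hsum : ∀ N : ℕ, ∑ n ∈ Finset.range (N+1), ((1/8:ℝ)*(3/4)^n) ≤ 1/2 := by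
        intro N
        rw [← Finset.mul_sum, geom_sum_eq (by norm_num : (3/4:ℝ) ≠ 1)]
        have h3 : (0:ℝ) ≤ (3/4:ℝ)^(N+1) := by positivity
        have h4 : ((3/4:ℝ)^(N+1) - 1)/((3/4:ℝ) - 1) ≤ 4 := by
          rw [div_le_iff_of_neg (by norm_num : (3/4:ℝ) - 1 < 0)]
          nlinarith
        linarith
      set tN : ℕ → ℝ := fun N => u + ((⌊2^N * (t - u)⌋₊ : ℕ) : ℝ)/2^N with htN
      have htu : 0 ≤ t - u := by linarith [ht.1]
      have hiN : ∀ N : ℕ, (⌊2^N * (t - u)⌋₊ : ℕ) ≤ 2^N := by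
        intro N
        have h1 : (2:ℝ)^N * (t - u) ≤ 2^N := by
          nlinarith [ht.1, ht.2, pow_pos (by norm_num : (0:ℝ) < 2) N]
        have h2 : (⌊2^N * (t - u)⌋₊ : ℝ) ≤ ((2^N : ℕ) : ℝ) := by
          push_cast
          exact (Nat.floor_le (by positivity)).trans h1
        exact_mod_cast h2
      have hbound : ∀ N : ℕ, |B (tN N) ω - B u ω| ≤ a * (1/2) := by
        intro N
        refine (hdy N _ (hiN N)).trans ?_
        have := hsum N
        nlinarith
      have htend : Filter.Tendsto tN Filter.atTop (nhds t) := by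
        rw [tendsto_iff_dist_tendsto_zero]
        refine squeeze_zero (fun N => dist_nonneg) (fun N => ?_)
          (tendsto_pow_atTop_nhds_zero_of_lt_one (by norm_num) (by norm_num : (1:ℝ)/2 < 1))
        have hp : (0:ℝ) < 2^N := by positivity
        have hfl : ((⌊2^N * (t - u)⌋₊ : ℕ) : ℝ) ≤ 2^N * (t - u) := Nat.floor_le (by positivity)
        have hfu : 2^N * (t - u) < (⌊2^N * (t - u)⌋₊ : ℕ) + 1 := Nat.lt_floor_add_one _
        have hhalf : ((1:ℝ)/2)^N = 1/2^N := by rw [div_pow, one_pow]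
        rw [Real.dist_eq, abs_le, hhalf]
        have e1 : (((⌊2^N * (t - u)⌋₊ : ℕ) : ℝ)/2^N) * 2^N = ((⌊2^N * (t - u)⌋₊ : ℕ) : ℝ) :=
          div_mul_cancel₀ _ (ne_of_gt hp)
        have e2 : ((1:ℝ)/2^N) * 2^N = 1 := div_mul_cancel₀ _ (ne_of_gt hp)
        constructor
        · nlinarith [e1, e2, hfu, hp]
        · nlinarith [e1, e2, hfl, hp]
      have hBtend : Filter.Tendsto (fun N => B (tN N) ω) Filter.atTop (nhds (B t ω)) :=
        (hcont.tendsto t).comp htend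
      have hlim : |B t ω - B u ω| ≤ a * (1/2) := by
        refine le_of_tendsto ((hBtend.sub tendsto_const_nhds).abs) ?_
        exact Filter.Eventually.of_forall hbound
      linarith
    have hnull : ℙ {ω | ¬ Continuous fun t => B t ω} = 0 := ae_iff.mp hB.cont
    have hterm : ∀ n j : ℕ, j ∈ Finset.range (2^n) →
        ℙ (A n j) ≤ ENNReal.ofReal (2 * rexp (-(a^2 * (9/8)^n / 256))) := by
      intro n j _
      have hb : (0:ℝ) < a * ((1/8)*(3/4)^n) := by positivity
      refine (bm_abs_tail hB (u + (j:ℕ)/2^n) (u + (j+1:ℕ)/2^n) _ hb).trans_eq ?_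
      congr 2
      have hp : (0:ℝ) < 2^n := by positivity
      have hwv : (u + ((j+1:ℕ):ℝ)/2^n) - (u + ((j:ℕ):ℝ)/2^n) = 1/2^n := by
        push_cast; ring
      rw [hwv, abs_of_pos (by positivity)]
      have e1 : (((3:ℝ)/4)^n)^2 = ((9:ℝ)/16)^n := by
        rw [← pow_mul, mul_comm, pow_mul]
        norm_num
      have e2 : ((9:ℝ)/16)^n * 2^n = ((9:ℝ)/8)^n := by
        rw [← mul_pow]; norm_num
      rw [show (a * ((1/8)*(3/4)^n))^2 = a^2 * (((3:ℝ)/4)^n)^2 / 64 by ring, e1]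
      rw [← e2]
      field_simp
      ring
    calc ℙ {ω | ∃ t ∈ Set.Icc u (u+1), a ≤ |B t ω - B u ω|}
        ≤ ℙ (G ∪ {ω | ¬ Continuous fun t => B t ω}) := measure_mono hincl
      _ ≤ ℙ G + ℙ {ω | ¬ Continuous fun t => B t ω} := measure_union_le _ _
      _ = ℙ G := by rw [hnull, add_zero]
      _ ≤ ∑' n : ℕ, ℙ (⋃ j ∈ Finset.range (2^n), A n j) := measure_iUnion_le _
      _ ≤ ∑' n : ℕ, ENNReal.ofReal ((2:ℝ)^n * (2 * rexp (-(a^2 * (9/8)^n / 256)))) := by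
          refine ENNReal.tsum_le_tsum fun n => ?_
          refine (measure_biUnion_finset_le _ _).trans ?_
          refine (Finset.sum_le_card_nsmul _ _ _ (hterm n)).trans_eq ?_
          rw [Finset.card_range, nsmul_eq_mul]
          have hcast : ((2^n : ℕ) : ENNReal) = ENNReal.ofReal ((2:ℝ)^n) := by
            rw [ENNReal.ofReal_pow (by norm_num : (0:ℝ) ≤ 2)]
            norm_num
          rw [hcast, ← ENNReal.ofReal_mul (by positivity)]
      _ ≤ ∑' n : ℕ, ENNReal.ofReal ((2 * rexp (-a^2/256)) * (1/3:ℝ)^n) := by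
          refine ENNReal.tsum_le_tsum fun n => ENNReal.ofReal_le_ofReal ?_
          have hberno : 1 + (n:ℝ)*(1/8) ≤ (1+1/8:ℝ)^n :=
            one_add_mul_le_pow (by norm_num) n
          have ha2 : (4096:ℝ) ≤ a^2 := by nlinarith
          have hn0 : (0:ℝ) ≤ (n:ℝ) := Nat.cast_nonneg n
          have hexp : a^2/256 + 2*(n:ℝ) ≤ a^2*(9/8:ℝ)^n/256 := by
            have h98 : (1+1/8:ℝ) = 9/8 := by norm_num
            rw [h98] at hberno
            nlinarith [mul_le_mul_of_nonneg_left hberno (sq_nonneg a)]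
          have hexp2 : rexp (-(a^2 * (9/8:ℝ)^n / 256)) ≤ rexp (-a^2/256) * (rexp (-2))^n := by
            rw [← Real.exp_nat_mul, ← Real.exp_add]
            apply Real.exp_le_exp.mpr
            have : (n:ℝ) * (-2) = -(2*(n:ℝ)) := by ring
            rw [this]
            linarith
          have hpow : ((2:ℝ) * rexp (-2))^n ≤ ((1:ℝ)/3)^n := by
            apply pow_le_pow_left₀ (by positivity)
            have hlt := Real.exp_one_gt_d9
            have h2e : rexp 2 = rexp 1 * rexp 1 := by
              rw [← Real.exp_add]; norm_num
            rw [Real.exp_neg]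
            rw [h2e] at *
            have hpos := Real.exp_pos 1
            have hinv : (rexp 1 * rexp 1) * (rexp 1 * rexp 1)⁻¹ = 1 :=
              mul_inv_cancel₀ (by positivity)
            nlinarith [inv_pos.mpr (mul_pos hpos hpos)]
          have e3 : (rexp (-2))^n * (2:ℝ)^n = ((2:ℝ) * rexp (-2))^n := by
            rw [← mul_pow]; ring_nf
          nlinarith [Real.exp_pos (-a^2/256), pow_pos (Real.exp_pos (-2)) n,
            pow_pos (by norm_num : (0:ℝ) < 2) n, mul_pos (Real.exp_pos (-a^2/256)) (pow_pos (Real.exp_pos (-2)) n),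
            mul_le_mul_of_nonneg_left hpow (le_of_lt (mul_pos (by norm_num : (0:ℝ) < 2) (Real.exp_pos (-a^2/256))))]
      _ = ENNReal.ofReal (∑' n : ℕ, (2 * rexp (-a^2/256)) * (1/3:ℝ)^n) := by
          exact (ENNReal.ofReal_tsum_of_nonneg (fun n => by positivity)
            ((summable_geometric_of_lt_one (by norm_num) (by norm_num)).mul_left _)).symm
      _ ≤ ENNReal.ofReal (4096 * rexp (-a^2/4096)) := by
          refine ENNReal.ofReal_le_ofReal ?_
          rw [_root_.tsum_mul_left, tsum_geometric_of_lt_one (by norm_num) (by norm_num)]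
          have h1 : rexp (-a^2/256) ≤ rexp (-a^2/4096) := by
            apply Real.exp_le_exp.mpr
            nlinarith
          have h2 : ((1:ℝ) - 1/3)⁻¹ = 3/2 := by norm_num
          rw [h2]
          nlinarith [Real.exp_pos (-a^2/256), Real.exp_pos (-a^2/4096)]

end BM

section BM2
variable {Ω : Type} [MeasureSpace Ω] [IsProbabilityMeasure (ℙ : Measure Ω)]
  {B : ℝ → Ω → ℝ} (hB : IsTwoSidedBM B)
include hB

lemma pair_bound (s : ℝ) (hs1 : 1 ≤ s) (m k : ℤ) :
    ℙ (pairSet (Ω := Ω) B s m k) ≤ ENNReal.ofReal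
      (36864 * rexp (-(s ^ ((3:ℝ)/2))/18874368) * (rexp (-(1:ℝ)/18874368))^((m-k).natAbs)) := by
  have hs0 : (0:ℝ) < s := lt_of_lt_of_le one_pos hs1
  set d : ℕ := ((m - k).natAbs - 1) with hd
  have hτeq : tau s m k = (s + (d:ℝ)^2)/12 := rfl
  have hτ : 0 < tau s m k := by rw [hτeq]; positivity
  have hkey := key_ineq hs1 d
  have hX0 : 0 ≤ s ^ ((3:ℝ)/2) := Real.rpow_nonneg (le_of_lt hs0) _
  have hbd : ∀ c : ℝ, 0 < c → c ≤ 4096 * ((d:ℝ)+1) →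
      rexp (-(tau s m k)^2 / c) ≤ rexp (-((s ^ ((3:ℝ)/2) + d)/18874368)) := by
    intro c hc0 hc2
    apply Real.exp_le_exp.mpr
    have h1 : (tau s m k)^2/(4096 * ((d:ℝ)+1)) ≤ (tau s m k)^2/c :=
      div_le_div_of_nonneg_left (sq_nonneg _) hc0 hc2
    rw [hτeq] at h1 ⊢
    rw [neg_div, neg_le_neg_iff] at *
    linarith [hkey]
  set bd : ENNReal := ENNReal.ofReal (4096 * rexp (-((s ^ ((3:ℝ)/2) + d)/18874368))) with hbdd
  have hU1 : ℙ {ω | ∃ x ∈ Set.Icc (m:ℝ) ((m:ℝ)+1), tau s m k ≤ |B x ω - B (m:ℝ) ω|} ≤ bd := by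
    refine (osc_tail hB (m:ℝ) _ hτ).trans (ENNReal.ofReal_le_ofReal ?_)
    have := hbd 4096 (by norm_num) (by nlinarith [Nat.cast_nonneg (α := ℝ) d])
    nlinarith [this]
  have hU2 : ℙ {ω | ∃ x ∈ Set.Icc (k:ℝ) ((k:ℝ)+1), tau s m k ≤ |B x ω - B (k:ℝ) ω|} ≤ bd := by
    refine (osc_tail hB (k:ℝ) _ hτ).trans (ENNReal.ofReal_le_ofReal ?_)
    have := hbd 4096 (by norm_num) (by nlinarith [Nat.cast_nonneg (α := ℝ) d])
    nlinarith [this]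
  have hU3 : ℙ {ω | tau s m k ≤ |B (m:ℝ) ω - B (k:ℝ) ω|} ≤ bd := by
    by_cases hmk : m = k
    · have hempty : {ω : Ω | tau s m k ≤ |B (m:ℝ) ω - B (k:ℝ) ω|} = ∅ := by
        ext ω
        simp only [Set.mem_setOf_eq, Set.mem_empty_iff_false, iff_false, not_le]
        have hzz : B (m:ℝ) ω - B (k:ℝ) ω = 0 := by rw [hmk, sub_self]
        rw [hzz, abs_zero]
        exact hτ
      rw [hempty, measure_empty]
      exact zero_le
    · have hne : (m - k).natAbs ≠ 0 := Int.natAbs_ne_zero.mpr (sub_ne_zero.mpr hmk)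
      have hnat : (m-k).natAbs = d + 1 := by omega
      refine (bm_abs_tail hB (k:ℝ) (m:ℝ) _ hτ).trans (ENNReal.ofReal_le_ofReal ?_)
      have habs : |(m:ℝ) - (k:ℝ)| = (d:ℝ) + 1 := by
        have h1 : ((m - k).natAbs : ℝ) = |(m:ℝ) - (k:ℝ)| := by
          rw [Nat.cast_natAbs, Int.cast_abs]
          push_cast
          ring_nf
        rw [← h1, hnat]
        push_cast
        ring
      rw [habs]
      have := hbd (4 * ((d:ℝ)+1)) (by positivity) (by nlinarith [Nat.cast_nonneg (α := ℝ) d])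
      nlinarith [this, Real.exp_pos (-((s ^ ((3:ℝ)/2) + d)/18874368)),
        Real.exp_pos (-(tau s m k)^2 / (4 * ((d:ℝ)+1)))]
  have hsplit : ℙ (pairSet B s m k) ≤ bd + (bd + bd) := by
    refine (measure_union_le _ _).trans ?_
    exact add_le_add hU1 ((measure_union_le _ _).trans (add_le_add hU2 hU3))
  refine hsplit.trans ?_
  rw [hbdd, ← ENNReal.ofReal_add (by positivity) (by positivity),
    ← ENNReal.ofReal_add (by positivity) (by positivity)]
  apply ENNReal.ofReal_le_ofReal
  set ρ : ℝ := rexp (-(1:ℝ)/18874368) with hρ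
  have hρ0 : 0 ≤ ρ := (Real.exp_pos _).le
  have hρ1 : ρ ≤ 1 := by
    rw [hρ, ← Real.exp_zero]
    apply Real.exp_le_exp.mpr
    norm_num
  have h3ρ : 1 ≤ 3 * ρ := by
    have := Real.add_one_le_exp (-(1:ℝ)/18874368)
    rw [hρ]
    nlinarith
  have hsplit2 : rexp (-((s ^ ((3:ℝ)/2) + d)/18874368))
      = rexp (-(s ^ ((3:ℝ)/2))/18874368) * ρ^d := by
    rw [hρ, ← Real.exp_nat_mul, ← Real.exp_add]
    congr 1
    push_cast
    ring
  have hmono : ρ^(d+1) ≤ ρ^((m-k).natAbs) :=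
    pow_le_pow_of_le_one hρ0 hρ1 (by omega)
  have hρd : ρ^d ≤ 3 * ρ^((m-k).natAbs) := by
    calc ρ^d = ρ^d * 1 := by ring
      _ ≤ ρ^d * (3*ρ) := by nlinarith [pow_nonneg hρ0 d]
      _ = 3 * ρ^(d+1) := by rw [pow_succ]; ring
      _ ≤ 3 * ρ^((m-k).natAbs) := by linarith
  rw [hsplit2]
  have hE : 0 < rexp (-(s ^ ((3:ℝ)/2))/18874368) := Real.exp_pos _
  nlinarith [mul_le_mul_of_nonneg_left hρd hE.le]

omit hB in
lemma decomp {r s : ℝ} (hr : 0 < r) (hs : 0 < s) :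
    {ω | ∃ y z : ℝ, |z| ≤ r ∧ s ≤ B y ω - B z ω - (y-z)^2/4}
      ⊆ ⋃ k ∈ Finset.Icc (-(⌈r⌉ : ℤ)) ⌈r⌉, ⋃ n : ℕ,
          (pairSet B s (k+n) k ∪ pairSet B s (k-n) k) := by
  intro ω hω
  obtain ⟨y, z, hz, hyz⟩ := hω
  set m := ⌊y⌋ with hm
  set k := ⌊z⌋ with hk
  have hk1 : -⌈r⌉ ≤ k := by
    have h1 : ⌊-r⌋ ≤ k := Int.floor_mono (neg_le_of_abs_le hz)
    rwa [Int.floor_neg] at h1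
  have hk2 : k ≤ ⌈r⌉ := by
    have h1 : (k:ℝ) ≤ (⌈r⌉:ℝ) := le_trans (Int.floor_le z) ((le_of_abs_le hz).trans (Int.le_ceil r))
    exact_mod_cast h1
  have hmem : ω ∈ pairSet B s m k := by
    set d : ℕ := ((m - k).natAbs - 1) with hd
    have hτeq : tau s m k = (s + (d:ℝ)^2)/12 := rfl
    have hmy : (m:ℝ) ≤ y := Int.floor_le y
    have hmy2 : y < (m:ℝ)+1 := Int.lt_floor_add_one y
    have hkz : (k:ℝ) ≤ z := Int.floor_le z
    have hkz2 : z < (k:ℝ)+1 := Int.lt_floor_add_one z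
    have habs : |(m:ℝ) - (k:ℝ)| < |y - z| + 1 := by
      have hy1 : y - z ≤ |y - z| := le_abs_self _
      have hy2 : -|y - z| ≤ y - z := neg_abs_le _
      rw [abs_lt]
      constructor <;> nlinarith
    have hdle : (d:ℝ) ≤ |y - z| := by
      rcases Nat.eq_zero_or_pos d with h0 | h1
      · rw [h0]
        simpa using abs_nonneg (y - z)
      · have hnat : ((m - k).natAbs : ℝ) = |(m:ℝ) - (k:ℝ)| := by
          rw [Nat.cast_natAbs, Int.cast_abs]
          push_cast
          ring_nf
        have hd1 : (m - k).natAbs = d + 1 := by omega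
        rw [hd1] at hnat
        push_cast at hnat
        linarith
    have h3τ : 3 * tau s m k ≤ B y ω - B z ω := by
      have hsq : (d:ℝ)^2 ≤ (y-z)^2 := by
        have h1 := sq_abs (y - z)
        nlinarith [abs_nonneg (y-z), Nat.cast_nonneg (α := ℝ) d]
      rw [hτeq]
      nlinarith
    simp only [pairSet, Set.mem_union, Set.mem_setOf_eq]
    by_cases hc1 : tau s m k ≤ B y ω - B (m:ℝ) ω
    · exact Or.inl ⟨y, ⟨hmy, by linarith⟩, le_trans hc1 (le_abs_self _)⟩
    by_cases hc2 : tau s m k ≤ B (k:ℝ) ω - B z ω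
    · refine Or.inr (Or.inl ⟨z, ⟨hkz, by linarith⟩, ?_⟩)
      rw [abs_sub_comm]
      exact le_trans hc2 (le_abs_self _)
    · refine Or.inr (Or.inr (le_trans ?_ (le_abs_self _)))
      push_neg at hc1 hc2
      have hdec : B y ω - B z ω = (B y ω - B (m:ℝ) ω) + (B (m:ℝ) ω - B (k:ℝ) ω)
          + (B (k:ℝ) ω - B z ω) := by ring
      linarith
  refine Set.mem_biUnion (Finset.mem_Icc.mpr ⟨hk1, hk2⟩) ?_
  refine Set.mem_iUnion.mpr ⟨(m - k).natAbs, ?_⟩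
  rcases le_total k m with hkm | hkm
  · left
    have he : k + ((m-k).natAbs : ℤ) = m := by
      rw [Int.natAbs_of_nonneg (by omega)]
      ring
    rwa [he]
  · right
    have he : k - ((m-k).natAbs : ℤ) = m := by
      rw [Int.ofNat_natAbs_of_nonpos (by omega)]
      ring
    rwa [he]

lemma k_bound (s : ℝ) (hs1 : 1 ≤ s) (k : ℤ) :
    ℙ (⋃ n : ℕ, (pairSet B s (k+n) k ∪ pairSet B s (k-n) k))
      ≤ ENNReal.ofReal (73728 * 18874369 * rexp (-(s ^ ((3:ℝ)/2))/18874368)) := by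
  set ρ : ℝ := rexp (-(1:ℝ)/18874368) with hρ
  set E : ℝ := rexp (-(s ^ ((3:ℝ)/2))/18874368) with hE
  have hE0 : 0 < E := Real.exp_pos _
  have hρ0 : 0 ≤ ρ := (Real.exp_pos _).le
  have hρ1 : ρ < 1 := by
    rw [hρ, ← Real.exp_zero]
    apply Real.exp_lt_exp.mpr
    norm_num
  have hn : ∀ n : ℕ, ℙ (pairSet B s (k+n) k ∪ pairSet B s (k-n) k)
      ≤ ENNReal.ofReal ((2 * 36864 * E) * ρ^n) := by
    intro n
    refine (measure_union_le _ _).trans ?_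
    have h1 := pair_bound hB s hs1 (k+(n:ℤ)) k
    have h2 := pair_bound hB s hs1 (k-(n:ℤ)) k
    have e1 : (k + (n:ℤ) - k).natAbs = n := by
      simp
    have e2 : (k - (n:ℤ) - k).natAbs = n := by
      simp
    rw [e1] at h1
    rw [e2] at h2
    refine (add_le_add h1 h2).trans_eq ?_
    rw [← ENNReal.ofReal_add (by positivity) (by positivity)]
    congr 1
    rw [← hρ, ← hE]
    ring
  refine (measure_iUnion_le _).trans ((ENNReal.tsum_le_tsum hn).trans ?_)
  rw [← ENNReal.ofReal_tsum_of_nonneg (fun n => by positivity)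
    ((summable_geometric_of_lt_one hρ0 hρ1).mul_left _)]
  apply ENNReal.ofReal_le_ofReal
  rw [_root_.tsum_mul_left, tsum_geometric_of_lt_one hρ0 hρ1]
  have hgeo : (1 - ρ)⁻¹ ≤ 18874369 := by
    have hmul : rexp ((1:ℝ)/18874368) * ρ = 1 := by
      rw [hρ, ← Real.exp_add]
      norm_num
    have hexp : (1:ℝ)/18874368 + 1 ≤ rexp ((1:ℝ)/18874368) := Real.add_one_le_exp _
    have hρub : ρ ≤ 1 - 1/18874369 := by nlinarith [Real.exp_pos ((1:ℝ)/18874368)]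
    have h1 : (1:ℝ)/18874369 ≤ 1 - ρ := by linarith
    rw [← one_div]
    calc (1:ℝ)/(1-ρ) ≤ 1/((1:ℝ)/18874369) := by
          apply one_div_le_one_div_of_le
          · norm_num
          · exact h1
      _ = 18874369 := by norm_num
  have h2 : 0 ≤ 2 * 36864 * E := by positivity
  nlinarith [mul_le_mul_of_nonneg_left hgeo h2]

end BM2

theorem stmt_10 :
    ∃ C : ℝ, 0 < C ∧
      ∀ (Ω : Type) [MeasureSpace Ω] [IsProbabilityMeasure (ℙ : Measure Ω)]
        (B : ℝ → Ω → ℝ), IsTwoSidedBM B →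
        ∀ r s : ℝ, 0 < r → 0 < s →
          ℙ {ω | ∃ y z : ℝ, |z| ≤ r ∧ s ≤ B y ω - B z ω - (y-z)^2/4}
            ≤ ENNReal.ofReal ((r+1) * C * Real.exp (-(s ^ ((3:ℝ)/2))/C)) := by
  refine ⟨221184 * 18874369, by norm_num, ?_⟩
  intro Ω _ _ B hB r s hr hs
  set C : ℝ := 221184 * 18874369 with hC
  have hC0 : (0:ℝ) < C := by norm_num
  have h320 : 0 ≤ s ^ ((3:ℝ)/2) := Real.rpow_nonneg hs.le _
  by_cases hs1 : s < 1
  · refine prob_le_one.trans ?_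
    rw [show (1:ENNReal) = ENNReal.ofReal 1 by simp]
    apply ENNReal.ofReal_le_ofReal
    have h32 : s ^ ((3:ℝ)/2) ≤ 1 := Real.rpow_le_one hs.le hs1.le (by norm_num)
    have hexp : 1 - s ^ ((3:ℝ)/2)/C ≤ rexp (-(s ^ ((3:ℝ)/2))/C) := by
      have h2 := Real.add_one_le_exp (-(s ^ ((3:ℝ)/2))/C)
      have h3 : -(s ^ ((3:ℝ)/2))/C = -(s ^ ((3:ℝ)/2)/C) := by ring
      rw [h3] at h2 ⊢
      linarith
    have hstep : (1:ℝ)/2 ≤ rexp (-(s ^ ((3:ℝ)/2))/C) := by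
      have hfrac : s ^ ((3:ℝ)/2)/C ≤ 1/2 := by
        rw [div_le_iff₀ hC0]
        nlinarith
      linarith
    have hr1 : (1:ℝ) ≤ r + 1 := by linarith
    calc (1:ℝ) ≤ C * (1/2) := by rw [hC]; norm_num
      _ ≤ C * rexp (-(s ^ ((3:ℝ)/2))/C) := mul_le_mul_of_nonneg_left hstep hC0.le
      _ = 1 * (C * rexp (-(s ^ ((3:ℝ)/2))/C)) := by ring
      _ ≤ (r+1) * (C * rexp (-(s ^ ((3:ℝ)/2))/C)) :=
          mul_le_mul_of_nonneg_right hr1 (by positivity)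
      _ = (r+1) * C * rexp (-(s ^ ((3:ℝ)/2))/C) := by ring
  · push_neg at hs1
    set R : ℤ := ⌈r⌉ with hR
    have hR1 : 1 ≤ R := by
      have := Int.ceil_pos.mpr hr
      omega
    calc ℙ {ω | ∃ y z : ℝ, |z| ≤ r ∧ s ≤ B y ω - B z ω - (y-z)^2/4}
        ≤ ℙ (⋃ k ∈ Finset.Icc (-R) R, ⋃ n : ℕ,
            (pairSet B s (k+n) k ∪ pairSet B s (k-n) k)) :=
          measure_mono (decomp hr hs)
      _ ≤ ∑ k ∈ Finset.Icc (-R) R, ℙ (⋃ n : ℕ,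
            (pairSet B s (k+n) k ∪ pairSet B s (k-n) k)) :=
          measure_biUnion_finset_le _ _
      _ ≤ (Finset.Icc (-R) R).card •
            ENNReal.ofReal (73728 * 18874369 * rexp (-(s ^ ((3:ℝ)/2))/18874368)) :=
          Finset.sum_le_card_nsmul _ _ _ (fun k _ => k_bound hB s hs1 k)
      _ ≤ ENNReal.ofReal ((r+1) * C * rexp (-(s ^ ((3:ℝ)/2))/C)) := by
          have hRr : (R:ℝ) < r + 1 := by
            rw [hR]; exact Int.ceil_lt_add_one r
          have hR1c : (1:ℝ) ≤ (R:ℝ) := by exact_mod_cast hR1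
          have hcard : (((Finset.Icc (-R) R).card : ℕ) : ℝ) ≤ 3 * (r + 1) := by
            rw [Int.card_Icc]
            have h4 : ((R + 1 - -R).toNat : ℝ) = ((2*R + 1 : ℤ) : ℝ) := by
              have h5 : R + 1 - -R = 2*R + 1 := by ring
              rw [h5, show (((2*R+1 : ℤ).toNat : ℕ) : ℝ) = (((2*R+1 : ℤ).toNat : ℤ) : ℝ) by
                  push_cast; ring,
                Int.toNat_of_nonneg (by omega)]
            rw [h4]
            push_cast
            nlinarith
          rw [nsmul_eq_mul, show (((Finset.Icc (-R) R).card : ℕ) : ENNReal)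
              = ENNReal.ofReal (((Finset.Icc (-R) R).card : ℕ) : ℝ) by rw [ENNReal.ofReal_natCast],
            ← ENNReal.ofReal_mul (by positivity)]
          apply ENNReal.ofReal_le_ofReal
          have hexpmono : rexp (-(s ^ ((3:ℝ)/2))/18874368) ≤ rexp (-(s ^ ((3:ℝ)/2))/C) := by
            apply Real.exp_le_exp.mpr
            rw [neg_div, neg_div, neg_le_neg_iff]
            gcongr
            · rw [hC]; norm_num
          have hEpos : 0 < rexp (-(s ^ ((3:ℝ)/2))/18874368) := Real.exp_pos _
          calc (((Finset.Icc (-R) R).card : ℕ) : ℝ)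
                * (73728 * 18874369 * rexp (-(s ^ ((3:ℝ)/2))/18874368))
              ≤ (3 * (r+1)) * (73728 * 18874369 * rexp (-(s ^ ((3:ℝ)/2))/18874368)) :=
                mul_le_mul_of_nonneg_right hcard (by positivity)
            _ = (r+1) * C * rexp (-(s ^ ((3:ℝ)/2))/18874368) := by rw [hC]; ring
            _ ≤ (r+1) * C * rexp (-(s ^ ((3:ℝ)/2))/C) := by
                apply mul_le_mul_of_nonneg_left hexpmono
                positivity
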